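/- The function S(a,b) = (6cpq/(a²b²))·(−2cpq + a·D)·(−2cpq + b·D)/E, with D = pq+2c(mp+nq) and E = −3pq((pq)² − 2cpq(mp+nq) − 4c²(mp+nq)²) + 8c³(3nm·pq(mp+nq) + (n³−n)q³ + (m³−m)p³), is symmetric: S(a,b) = S(b,a), and remains well defined for b = −a. -/
import Mathlib


/-- The N=3 rational NQC solution
`S(a,b) = (6cpq/(a²b²))·(−2cpq + aD)(−2cpq + bD)/E` is symmetric in `a,b`,
and remains well defined for `b = −a` (its denominator `a²b²E` stays nonzero). -/
theorem stmt_10 (p q c : ℝ) (hp : p ≠ 0) (hq : q ≠ 0) (hc : c ≠ 0)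
    (D E : ℤ → ℤ → ℝ)
    (hD : ∀ n m : ℤ, D n m = p*q + 2*c*((m : ℝ)*p + (n : ℝ)*q))
    (hE : ∀ n m : ℤ, E n m =
      -(3*p*q*((p*q)^2 - 2*c*p*q*((m : ℝ)*p + (n : ℝ)*q)
        - 4*c^2*((m : ℝ)*p + (n : ℝ)*q)^2))
      + 8*c^3*(3*(n : ℝ)*(m : ℝ)*p*q*((m : ℝ)*p + (n : ℝ)*q)
        + ((n : ℝ)^3 - (n : ℝ))*q^3 + ((m : ℝ)^3 - (m : ℝ))*p^3))
    (S : ℝ → ℝ → ℤ → ℤ → ℝ)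
    (hS : ∀ (a b : ℝ) (n m : ℤ),
      S a b n m = (6*c*p*q/(a^2*b^2)) * (-(2*c*p*q) + a * D n m)
        * (-(2*c*p*q) + b * D n m) / E n m)
    (a b : ℝ) (ha : a ≠ 0) (hb : b ≠ 0) (n m : ℤ) (hEnm : E n m ≠ 0) :
    S a b n m = S b a n m ∧ a^2 * (-a)^2 * E n m ≠ 0 := by
  constructor
  · rw [hS, hS]; ring
  · have : (-a)^2 ≠ 0 := pow_ne_zero _ (neg_ne_zero.mpr ha)
    exact mul_ne_zero (mul_ne_zero (pow_ne_zero _ ha) this) hEnm
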